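/- Suppose the K items have distinct expected reciprocal-rank scores m(i) = E[1/(σ(i)+1)] under a permutation distribution P, and let i* = argmax_i m(i). Then the probability that i* does not have the strictly largest aggregated score S(i) = Σ_{n=1}^N 1/(σ^(n)(i)+1) among all K items is at most (K-1) · exp(-N δ^2 / (2(K/(K+1))^2)), where δ = min_{i ≠ i*} (m(i*) - m(i)) > 0. -/

import Mathlib

open MeasureTheory ProbabilityTheory Real Finset

lemma integrable_exp_mul_of_abs_le {Ω : Type*} [MeasurableSpace Ω] {μ : Measure Ω}
    [IsFiniteMeasure μ] {Y : Ω → ℝ} (hY : Measurable Y) {c : ℝ} (hb : ∀ ω, |Y ω| ≤ c) (t : ℝ) :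
    Integrable (fun ω => exp (t * Y ω)) μ := by
  refine Integrable.mono' (integrable_const (exp (|t| * c)))
    ((hY.const_mul t).exp).aestronglyMeasurable (Filter.Eventually.of_forall fun ω => ?_)
  rw [Real.norm_eq_abs, Real.abs_exp, Real.exp_le_exp]
  calc t * Y ω ≤ |t * Y ω| := le_abs_self _
    _ = |t| * |Y ω| := abs_mul _ _
    _ ≤ |t| * c := mul_le_mul_of_nonneg_left (hb ω) (abs_nonneg t)

lemma mgf_le_of_abs_le {Ω : Type*} [MeasurableSpace Ω] {μ : Measure Ω}
    [IsProbabilityMeasure μ] {Y : Ω → ℝ} (hY : Measurable Y) {c : ℝ} (hc : 0 < c)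
    (hb : ∀ ω, |Y ω| ≤ c) (h0 : ∫ ω, Y ω ∂μ = 0) (t : ℝ) :
    mgf Y μ t ≤ exp (t ^ 2 * c ^ 2 / 2) := by
  set A := exp (t * -c) with hA
  set B := exp (t * c) with hB
  set k := (B - A) / (2 * c) with hk
  have hint : Integrable Y μ :=
    Integrable.mono' (integrable_const c) hY.aestronglyMeasurable
      (Filter.Eventually.of_forall fun ω => by rw [Real.norm_eq_abs]; exact hb ω)
  have key : ∀ ω, exp (t * Y ω) ≤ (A + B) / 2 + Y ω * k := by
    intro ω
    have hby := abs_le.1 (hb ω)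
    have h1 : (0:ℝ) ≤ (c - Y ω) / (2 * c) := div_nonneg (by linarith) (by linarith)
    have h2 : (0:ℝ) ≤ (c + Y ω) / (2 * c) := div_nonneg (by linarith) (by linarith)
    have h3 : (c - Y ω) / (2 * c) + (c + Y ω) / (2 * c) = 1 := by
      field_simp
      ring
    have hconv := convexOn_exp.2 (Set.mem_univ (t * -c)) (Set.mem_univ (t * c)) h1 h2 h3
    simp only [smul_eq_mul] at hconv
    have hxy : (c - Y ω) / (2 * c) * (t * -c) + (c + Y ω) / (2 * c) * (t * c) = t * Y ω := by
      field_simp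
      ring
    rw [hxy] at hconv
    refine hconv.trans_eq ?_
    rw [hk, hA, hB]
    field_simp
    ring
  have hexp : Integrable (fun ω => exp (t * Y ω)) μ := integrable_exp_mul_of_abs_le hY hb t
  have h1 : mgf Y μ t ≤ ∫ ω, ((A + B) / 2 + Y ω * k) ∂μ :=
    integral_mono hexp ((integrable_const _).add (hint.mul_const _)) key
  have h2 : ∫ ω, ((A + B) / 2 + Y ω * k) ∂μ = (A + B) / 2 := by
    rw [integral_add (integrable_const _) (hint.mul_const _), integral_const,
      integral_mul_const, h0, zero_mul, add_zero, probReal_univ, one_smul]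
  have h3 : (A + B) / 2 = Real.cosh (t * c) := by
    rw [Real.cosh_eq, hA, hB, mul_neg, add_comm]
  calc mgf Y μ t ≤ (A + B) / 2 := h1.trans_eq h2
    _ = Real.cosh (t * c) := h3
    _ ≤ exp ((t * c) ^ 2 / 2) := Real.cosh_le_exp_half_sq _
    _ = exp (t ^ 2 * c ^ 2 / 2) := by rw [mul_pow]

/-- Discrete σ-algebra on permutations of `Fin K`. -/
instance permMeasurableSpace (K : ℕ) : MeasurableSpace (Equiv.Perm (Fin K)) := ⊤

/-- reciprocal rank score -/
noncomputable def rrf (K : ℕ) (i : Fin K) (p : Equiv.Perm (Fin K)) : ℝ := 1 / ((((p i : ℕ) : ℝ) + 1) + 1)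

/-- If the `K` items have distinct expected reciprocal-rank scores
`m(i) = E[1/(σ(i)+1)]` and `i*` is the argmax, then the probability that `i*` does not
attain the strictly largest aggregated RRF score is at most
`(K-1)·exp(-N δ²/(2(K/(K+1))²))` where `δ = min_{i ≠ i*} (m(i*) - m(i)) > 0`.
Ranks are `(σ n ω i : ℕ) + 1 ∈ {1,...,K}`. -/
theorem stmt14 {Ω : Type*} [MeasurableSpace Ω] (P : Measure Ω) [IsProbabilityMeasure P]
    (K N : ℕ) (hK : 2 ≤ K) (σ : Fin N → Ω → Equiv.Perm (Fin K))
    (hmeas : ∀ n, Measurable (σ n))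
    (hindep : iIndepFun (m := fun _ => permMeasurableSpace K) σ P)
    (hident : ∀ n m : Fin N, IdentDistrib (σ n) (σ m) P P)
    (n0 : Fin N)
    (m : Fin K → ℝ)
    (hm : ∀ i : Fin K, m i = ∫ ω, 1 / ((((σ n0 ω i : ℕ) : ℝ) + 1) + 1) ∂P)
    (hdistinct : Function.Injective m)
    (istar : Fin K) (hmax : ∀ i : Fin K, i ≠ istar → m i < m istar)
    (δ : ℝ) (hne : (Finset.univ.erase istar).Nonempty)
    (hδ : δ = (Finset.univ.erase istar).inf' hne (fun i => m istar - m i)) :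
    0 < δ ∧
    (P {ω | ¬ ∀ i : Fin K, i ≠ istar →
          (∑ n : Fin N, 1 / ((((σ n ω i : ℕ) : ℝ) + 1) + 1)) <
          (∑ n : Fin N, 1 / ((((σ n ω istar : ℕ) : ℝ) + 1) + 1))}).toReal ≤
      ((K : ℝ) - 1) * exp (-(N : ℝ) * δ ^ 2 / (2 * ((K : ℝ) / ((K : ℝ) + 1)) ^ 2)) := by
  classical
  have hδpos : 0 < δ := by
    rw [hδ, Finset.lt_inf'_iff]
    intro i hi
    have hine : i ≠ istar := (Finset.mem_erase.1 hi).1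
    linarith [hmax i hine]
  refine ⟨hδpos, ?_⟩
  set c : ℝ := (K : ℝ) / ((K : ℝ) + 1) with hc_def
  have hK2 : (2:ℝ) ≤ (K:ℝ) := by exact_mod_cast hK
  have hKpos : (0:ℝ) < (K:ℝ) + 1 := by linarith
  have hc : 0 < c := div_pos (by linarith) hKpos
  -- bounds on rrf
  have hfl : ∀ (i : Fin K) (p : Equiv.Perm (Fin K)), 1 / ((K:ℝ) + 1) ≤ rrf K i p := by
    intro i p
    have h1 : (((p i : ℕ) : ℝ) + 1) + 1 ≤ (K:ℝ) + 1 := by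
      have : ((p i : ℕ) : ℝ) + 1 ≤ (K : ℝ) := by exact_mod_cast Nat.succ_le_of_lt (p i).isLt
      linarith
    have h2 : (0:ℝ) < (((p i : ℕ) : ℝ) + 1) + 1 := by positivity
    exact one_div_le_one_div_of_le h2 h1
  have hfu : ∀ (i : Fin K) (p : Equiv.Perm (Fin K)), rrf K i p ≤ 1 / 2 := by
    intro i p
    have h0 : (0:ℝ) ≤ ((p i : ℕ) : ℝ) := Nat.cast_nonneg _
    have h1 : (2:ℝ) ≤ (((p i : ℕ) : ℝ) + 1) + 1 := by linarith
    exact one_div_le_one_div_of_le (by norm_num) h1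
  -- measurability and integrability
  have hFmeas : ∀ (n : Fin N) (i : Fin K), Measurable (fun ω => rrf K i (σ n ω)) := by
    intro n i
    have h : Measurable (rrf K i ∘ σ n) := measurable_from_top.comp (hmeas n)
    exact h
  have hint : ∀ (n : Fin N) (i : Fin K), Integrable (fun ω => rrf K i (σ n ω)) P := by
    intro n i
    refine Integrable.mono' (integrable_const (1/2)) (hFmeas n i).aestronglyMeasurable
      (Filter.Eventually.of_forall fun ω => ?_)
    rw [Real.norm_eq_abs, abs_of_nonneg]
    · exact hfu i (σ n ω)
    · have h1 := hfl i (σ n ω)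
      have h2 : (0:ℝ) < 1 / ((K:ℝ) + 1) := by positivity
      linarith
  -- m is the common mean
  have hm' : ∀ (n : Fin N) (i : Fin K), ∫ ω, rrf K i (σ n ω) ∂P = m i := by
    intro n i
    rw [hm i]
    exact ((hident n n0).comp (measurable_from_top (f := rrf K i))).integral_eq
  have hml : ∀ i : Fin K, 1 / ((K:ℝ) + 1) ≤ m i := by
    intro i
    rw [← hm' n0 i]
    calc (1:ℝ) / ((K:ℝ) + 1) = ∫ _ω, 1 / ((K:ℝ) + 1) ∂P := by
          simp [integral_const]
      _ ≤ ∫ ω, rrf K i (σ n0 ω) ∂P :=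
          integral_mono (integrable_const _) (hint n0 i) (fun ω => hfl i (σ n0 ω))
  have hmu : ∀ i : Fin K, m i ≤ 1 / 2 := by
    intro i
    rw [← hm' n0 i]
    calc ∫ ω, rrf K i (σ n0 ω) ∂P ≤ ∫ _ω, 1 / 2 ∂P :=
          integral_mono (hint n0 i) (integrable_const _) (fun ω => hfu i (σ n0 ω))
      _ = 1 / 2 := by simp [integral_const]
  have hδle : ∀ i ∈ Finset.univ.erase istar, δ ≤ m istar - m i := by
    intro i hi
    rw [hδ]
    exact Finset.inf'_le _ hi
  have hcc : (1:ℝ) - 2 / ((K:ℝ) + 1) ≤ c := by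
    rw [hc_def]
    have hrw : (1:ℝ) - 2 / ((K:ℝ) + 1) = ((K:ℝ) - 1) / ((K:ℝ) + 1) := by
      field_simp
      ring
    rw [hrw, div_le_div_iff₀ hKpos hKpos]
    nlinarith
  -- the per-competitor sets
  have h12g : (1:ℝ) / ((K:ℝ) + 1) ≤ 1 / 2 := by
    apply one_div_le_one_div_of_le <;> linarith
  have hccl : -c ≤ 2 * (1 / ((K:ℝ) + 1)) - 1 := by
    have hx2 : (2:ℝ) / ((K:ℝ) + 1) = 2 * (1 / ((K:ℝ) + 1)) := by ring
    rw [← hx2]; linarith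
  have hccu : 1 / 2 - 1 / ((K:ℝ) + 1) ≤ c := by linarith
  set Aset : Fin K → Set Ω :=
    fun i => {ω | (∑ n : Fin N, rrf K istar (σ n ω)) ≤ ∑ n : Fin N, rrf K i (σ n ω)} with hAset
  have claim : ∀ i ∈ Finset.univ.erase istar,
      (P (Aset i)).toReal ≤ exp (-(N:ℝ) * δ ^ 2 / (2 * c ^ 2)) := by
    intro i hi
    set μi := m istar - m i with hμi
    have hδμ : δ ≤ μi := hδle i hi
    set Y : Fin N → Ω → ℝ := fun n ω => rrf K istar (σ n ω) - rrf K i (σ n ω) - μi with hY_def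
    have hYmeas : ∀ n, Measurable (Y n) :=
      fun n => ((hFmeas n istar).sub (hFmeas n i)).sub measurable_const
    have hYb : ∀ n ω, |Y n ω| ≤ c := by
      intro n ω
      have l1 := hfl istar (σ n ω); have u1 := hfu istar (σ n ω)
      have l2 := hfl i (σ n ω); have u2 := hfu i (σ n ω)
      have lm1 := hml istar; have um1 := hmu istar
      have lm2 := hml i; have um2 := hmu i
      have hmub : μi ≤ 1 / 2 - 1 / ((K:ℝ) + 1) := by rw [hμi]; linarith
      have hmlb : 0 ≤ μi := le_trans hδpos.le hδμ
      rw [abs_le]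
      refine ⟨?_, ?_⟩ <;> simp only [hY_def] <;> linarith [hccl, hccu]
    have hY0 : ∀ n, ∫ ω, Y n ω ∂P = 0 := by
      intro n
      simp only [hY_def]
      have hsubint : Integrable (fun ω => rrf K istar (σ n ω) - rrf K i (σ n ω)) P :=
        (hint n istar).sub (hint n i)
      rw [integral_sub hsubint (integrable_const _),
        integral_sub (hint n istar) (hint n i), hm' n istar, hm' n i, integral_const,
        probReal_univ, one_smul, hμi, sub_self]
    have hYindep : iIndepFun Y P := by
      have h := hindep.comp (fun _ p => rrf K istar p - rrf K i p - μi)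
        (fun _ => measurable_from_top)
      exact h
    set t : ℝ := -(δ / c ^ 2) with ht_def
    have ht : t ≤ 0 := neg_nonpos.mpr (div_nonneg hδpos.le (sq_nonneg c))
    have hintexp : Integrable (fun ω => exp (t * (∑ n, Y n) ω)) P :=
      hYindep.integrable_exp_mul_sum hYmeas
        (fun n _ => integrable_exp_mul_of_abs_le (hYmeas n) (hYb n) t)
    have hch := measure_le_le_exp_mul_mgf (μ := P) (X := ∑ n, Y n) (-((N:ℝ) * δ)) ht hintexp
    have hmgf : mgf (∑ n, Y n) P t ≤ exp ((N:ℝ) * (t ^ 2 * c ^ 2 / 2)) := by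
      rw [hYindep.mgf_sum hYmeas]
      calc ∏ n : Fin N, mgf (Y n) P t ≤ ∏ _n : Fin N, exp (t ^ 2 * c ^ 2 / 2) :=
            Finset.prod_le_prod (fun n _ => mgf_nonneg)
              (fun n _ => mgf_le_of_abs_le (hYmeas n) hc (hYb n) (hY0 n) t)
        _ = exp ((N:ℝ) * (t ^ 2 * c ^ 2 / 2)) := by
            rw [Finset.prod_const, Finset.card_univ, Fintype.card_fin, ← Real.exp_nat_mul]
    have hsub : Aset i ⊆ {ω | (∑ n, Y n) ω ≤ -((N:ℝ) * δ)} := by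
      intro ω hω
      simp only [hAset, Set.mem_setOf_eq] at hω
      simp only [Set.mem_setOf_eq]
      have hsum : (∑ n, Y n) ω =
          ((∑ n : Fin N, rrf K istar (σ n ω)) - ∑ n : Fin N, rrf K i (σ n ω)) - (N:ℝ) * μi := by
        simp only [Finset.sum_apply, hY_def, Finset.sum_sub_distrib, Finset.sum_const,
          Finset.card_univ, Fintype.card_fin, nsmul_eq_mul]
      have hN : (N:ℝ) * δ ≤ (N:ℝ) * μi := mul_le_mul_of_nonneg_left hδμ (Nat.cast_nonneg N)
      rw [hsum]
      linarith
    calc (P (Aset i)).toReal ≤ (P {ω | (∑ n, Y n) ω ≤ -((N:ℝ) * δ)}).toReal :=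
          ENNReal.toReal_mono (measure_ne_top _ _) (measure_mono hsub)
      _ ≤ exp (-t * -((N:ℝ) * δ)) * mgf (∑ n, Y n) P t := hch
      _ ≤ exp (-t * -((N:ℝ) * δ)) * exp ((N:ℝ) * (t ^ 2 * c ^ 2 / 2)) :=
          mul_le_mul_of_nonneg_left hmgf (exp_pos _).le
      _ = exp (-(N:ℝ) * δ ^ 2 / (2 * c ^ 2)) := by
          rw [← Real.exp_add]
          congr 1
          rw [ht_def]
          field_simp
          ring
  -- union bound
  have hsub2 : {ω | ¬ ∀ i : Fin K, i ≠ istar →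
        (∑ n : Fin N, 1 / ((((σ n ω i : ℕ) : ℝ) + 1) + 1)) <
        (∑ n : Fin N, 1 / ((((σ n ω istar : ℕ) : ℝ) + 1) + 1))} ⊆
      ⋃ i ∈ Finset.univ.erase istar, Aset i := by
    intro ω hω
    simp only [Set.mem_setOf_eq] at hω
    push_neg at hω
    obtain ⟨i, hine, hle⟩ := hω
    refine Set.mem_biUnion (Finset.mem_erase.2 ⟨hine, Finset.mem_univ i⟩) ?_
    simp only [hAset, Set.mem_setOf_eq]
    exact hle
  have hcard : ((Finset.univ.erase istar).card : ℝ) = (K:ℝ) - 1 := by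
    rw [Finset.card_erase_of_mem (Finset.mem_univ _), Finset.card_univ, Fintype.card_fin,
      Nat.cast_sub (le_trans one_le_two hK), Nat.cast_one]
  calc (P {ω | ¬ ∀ i : Fin K, i ≠ istar →
        (∑ n : Fin N, 1 / ((((σ n ω i : ℕ) : ℝ) + 1) + 1)) <
        (∑ n : Fin N, 1 / ((((σ n ω istar : ℕ) : ℝ) + 1) + 1))}).toReal
      ≤ (P (⋃ i ∈ Finset.univ.erase istar, Aset i)).toReal :=
        ENNReal.toReal_mono (measure_ne_top _ _) (measure_mono hsub2)
    _ ≤ (∑ i ∈ Finset.univ.erase istar, P (Aset i)).toReal :=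
        ENNReal.toReal_mono (ENNReal.sum_lt_top.mpr fun i _ => measure_lt_top _ _).ne
          (measure_biUnion_finset_le _ _)
    _ = ∑ i ∈ Finset.univ.erase istar, (P (Aset i)).toReal :=
        ENNReal.toReal_sum fun i _ => measure_ne_top _ _
    _ ≤ ∑ _i ∈ Finset.univ.erase istar, exp (-(N:ℝ) * δ ^ 2 / (2 * c ^ 2)) :=
        Finset.sum_le_sum claim
    _ = ((K:ℝ) - 1) * exp (-(N:ℝ) * δ ^ 2 / (2 * c ^ 2)) := by
        rw [Finset.sum_const, nsmul_eq_mul, hcard]
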